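/- If s is a cyclic word such that [s] is (k,n)-perfect, then the reversed cyclic word (reading s backwards) is also (k,n)-perfect. -/

import Mathlib

/-- `w` (a word of length `k`) occurs at position `i` in the cyclic word given by
the first `L` symbols of `s`. -/
def OccursAt {A : Type*} {k : ℕ} (s : ℕ → A) (L : ℕ) (w : Fin k → A) (i : ℕ) : Prop :=
  ∀ j : Fin k, s ((i + (j : ℕ)) % L) = w j

/-- The cyclic word given by the first `n * |A| ^ k` values of `s` is a
`(k,n)`-perfect necklace: every word of length `k` occurs exactly `n` times, and
the occurrence positions are pairwise distinct modulo `n`. -/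
def IsPerfectNecklace {A : Type*} [Fintype A] (k n : ℕ) (s : ℕ → A) : Prop :=
  ∀ w : Fin k → A,
    Nat.card {i : ℕ // i < n * Fintype.card A ^ k ∧
      OccursAt s (n * Fintype.card A ^ k) w i} = n ∧
    ∀ i i' : ℕ, i < n * Fintype.card A ^ k → i' < n * Fintype.card A ^ k →
      OccursAt s (n * Fintype.card A ^ k) w i →
      OccursAt s (n * Fintype.card A ^ k) w i' →
      i % n = i' % n → i = i'

private lemma key_mod (L a b : ℕ) (hb : b < L) (hab : b ≤ a) :
    (L - 1 - a % L + b) % L = L - 1 - (a - b) % L := by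
  have hL : 0 < L := lt_of_le_of_lt (Nat.zero_le b) hb
  obtain ⟨q, r, hr, rfl⟩ : ∃ q r, r < L ∧ a = L * q + r :=
    ⟨a / L, a % L, Nat.mod_lt _ hL, (Nat.div_add_mod a L).symm⟩
  rw [Nat.mul_add_mod, Nat.mod_eq_of_lt hr]
  rcases le_or_gt b r with h | h
  · have h1 : L * q + r - b = L * q + (r - b) := by omega
    rw [h1, Nat.mul_add_mod, Nat.mod_eq_of_lt (show r - b < L by omega),
      Nat.mod_eq_of_lt (show L - 1 - r + b < L by omega)]
    omega
  · rcases q with _ | q'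
    · omega
    · have hms : L * (q' + 1) = L * q' + L := by ring
      have h1 : L * (q' + 1) + r - b = L * q' + (L + r - b) := by omega
      have h2 : L - 1 - r + b = L * 1 + (b - 1 - r) := by omega
      rw [h1, Nat.mul_add_mod, Nat.mod_eq_of_lt (show L + r - b < L by omega), h2,
        Nat.mul_add_mod, Nat.mod_eq_of_lt (show b - 1 - r < L by omega)]
      omega

private lemma rev_index {k L : ℕ} (hk : 0 < k) (hkL : k ≤ L) (i : ℕ) (j : Fin k) :
    (L - 1 - (i + (k - 1)) % L + (j : ℕ)) % L = L - 1 - (i + (j.rev : ℕ)) % L := by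
  have hj : (j : ℕ) < k := j.isLt
  rw [key_mod L (i + (k - 1)) j (by omega) (by omega)]
  have h : i + (k - 1) - (j : ℕ) = i + (j.rev : ℕ) := by
    rw [Fin.val_rev]; omega
  rw [h]

private lemma phi_phi {k L : ℕ} (hk : 0 < k) (hkL : k ≤ L) {i : ℕ} (hi : i < L) :
    L - 1 - (L - 1 - (i + (k - 1)) % L + (k - 1)) % L = i := by
  rw [key_mod L (i + (k - 1)) (k - 1) (by omega) (by omega), Nat.add_sub_cancel,
    Nat.mod_eq_of_lt hi]
  omega

private lemma occ_rev {A : Type*} {k L : ℕ} (hk : 0 < k) (hkL : k ≤ L) (s : ℕ → A)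
    (w : Fin k → A) (i : ℕ) :
    OccursAt (fun x => s (L - 1 - x % L)) L w i ↔
      OccursAt s L (w ∘ Fin.rev) (L - 1 - (i + (k - 1)) % L) := by
  have hL : 0 < L := lt_of_lt_of_le hk hkL
  constructor
  · intro h j
    have h2 := h j.rev
    simp only [Nat.mod_mod_of_dvd _ dvd_rfl] at h2
    rw [Function.comp_apply, rev_index hk hkL i j]
    exact h2
  · intro h j
    have h2 := h j.rev
    rw [Function.comp_apply, rev_index hk hkL i j.rev, Fin.rev_rev] at h2
    show s (L - 1 - (i + (j : ℕ)) % L % L) = w j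
    rw [Nat.mod_mod_of_dvd _ dvd_rfl]
    exact h2

private lemma occ_rev' {A : Type*} {k L : ℕ} (hk : 0 < k) (hkL : k ≤ L) (s : ℕ → A)
    (w : Fin k → A) (i : ℕ) :
    OccursAt s L w i ↔
      OccursAt (fun x => s (L - 1 - x % L)) L (w ∘ Fin.rev) (L - 1 - (i + (k - 1)) % L) := by
  have hL : 0 < L := lt_of_lt_of_le hk hkL
  constructor
  · intro h j
    have h2 := h j.rev
    have hlt : (i + (j.rev : ℕ)) % L < L := Nat.mod_lt _ hL
    show s (L - 1 - (L - 1 - (i + (k - 1)) % L + (j : ℕ)) % L % L) = (w ∘ Fin.rev) j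
    rw [rev_index hk hkL i j, Nat.mod_eq_of_lt (show L - 1 - (i + (j.rev : ℕ)) % L < L by omega),
      show L - 1 - (L - 1 - (i + (j.rev : ℕ)) % L) = (i + (j.rev : ℕ)) % L from by omega]
    exact h2
  · intro h j
    have h2 := h j.rev
    have hlt : (i + (j : ℕ)) % L < L := Nat.mod_lt _ hL
    rw [show ((fun x => s (L - 1 - x % L))
          ((L - 1 - (i + (k - 1)) % L + (j.rev : ℕ)) % L) = (w ∘ Fin.rev) j.rev) =
        (s (L - 1 - (L - 1 - (i + (k - 1)) % L + (j.rev : ℕ)) % L % L) = w j.rev.rev) from rfl,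
      rev_index hk hkL i j.rev, Fin.rev_rev,
      Nat.mod_eq_of_lt (show L - 1 - (i + (j : ℕ)) % L < L by omega),
      show L - 1 - (L - 1 - (i + (j : ℕ)) % L) = (i + (j : ℕ)) % L from by omega] at h2
    exact h2

private lemma sub_mod_eq {n L r r' : ℕ} (hr : r < L) (hr' : r' < L) (h : r % n = r' % n) :
    (L - 1 - r) % n = (L - 1 - r') % n := by
  have h3 : (L - 1 - r) + r ≡ (L - 1 - r') + r' [MOD n] := by
    rw [show (L - 1 - r) + r = L - 1 from by omega, show (L - 1 - r') + r' = L - 1 from by omega]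
  exact Nat.ModEq.add_right_cancel h h3

/-- Reversing a `(k,n)`-perfect necklace yields a `(k,n)`-perfect necklace. -/
theorem perfect_of_reverse {A : Type*} [Fintype A] (k n : ℕ)
    (s : ℕ → A) (hs : IsPerfectNecklace k n s) :
    IsPerfectNecklace k n
      (fun i => s (n * Fintype.card A ^ k - 1 - i % (n * Fintype.card A ^ k))) := by
  rcases Nat.lt_or_ge (Fintype.card A) 2 with hA | hA
  · rcases (by omega : Fintype.card A = 0 ∨ Fintype.card A = 1) with h0 | h1
    · exact ((Fintype.card_eq_zero_iff.mp h0).false (s 0)).elim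
    · have hsub : Subsingleton A :=
        Fintype.card_le_one_iff_subsingleton.mp (le_of_eq h1)
      have he : (fun i => s (n * Fintype.card A ^ k - 1 - i % (n * Fintype.card A ^ k))) = s :=
        funext fun i => Subsingleton.elim _ _
      rw [he]; exact hs
  · rcases Nat.eq_zero_or_pos n with rfl | hn
    · intro w
      constructor
      · rw [Nat.card_eq_zero]
        exact Or.inl ⟨fun x => by have := x.2.1; omega⟩
      · intro i i' h1 h2 _ _ _
        omega
    · rcases Nat.eq_zero_or_pos k with rfl | hk
      · intro w
        have hocc : ∀ (u : ℕ → A) (i : ℕ), OccursAt u (n * Fintype.card A ^ 0) w i :=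
          fun u i j => j.elim0
        obtain ⟨h1, h2⟩ := hs w
        constructor
        · refine Eq.trans ?_ h1
          exact Nat.card_congr (Equiv.subtypeEquivRight fun i =>
            ⟨fun hi => ⟨hi.1, hocc _ _⟩, fun hi => ⟨hi.1, hocc _ _⟩⟩)
        · intro i i' hi hi' _ _ hmod
          exact h2 i i' hi hi' (hocc s i) (hocc s i') hmod
      · set L := n * Fintype.card A ^ k with hL
        have hkL : k ≤ L :=
          le_trans (le_of_lt (Nat.lt_two_pow_self (n := k)))
            (le_trans (Nat.pow_le_pow_left hA k) (Nat.le_mul_of_pos_left _ hn))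
        have hL0 : 0 < L := lt_of_lt_of_le hk hkL
        have hφlt : ∀ m : ℕ, L - 1 - m < L :=
          fun m => lt_of_le_of_lt (Nat.sub_le _ _) (Nat.sub_lt hL0 Nat.one_pos)
        intro w
        obtain ⟨h1, h2⟩ := hs (w ∘ Fin.rev)
        have hwrr : (w ∘ Fin.rev) ∘ Fin.rev = w := funext fun j => by simp [Fin.rev_rev]
        constructor
        · refine Eq.trans ?_ h1
          refine Nat.card_congr ⟨fun x => ⟨L - 1 - (x.1 + (k - 1)) % L, hφlt _, ?_⟩,
            fun x => ⟨L - 1 - (x.1 + (k - 1)) % L, hφlt _, ?_⟩, ?_, ?_⟩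
          · exact (occ_rev hk hkL s w x.1).mp x.2.2
          · have := (occ_rev' hk hkL s (w ∘ Fin.rev) x.1).mp x.2.2
            rwa [hwrr] at this
          · intro x; exact Subtype.ext (phi_phi hk hkL x.2.1)
          · intro x; exact Subtype.ext (phi_phi hk hkL x.2.1)
        · intro i i' hi hi' hoi hoi' hmod
          have p1 := (occ_rev hk hkL s w i).mp hoi
          have p2 := (occ_rev hk hkL s w i').mp hoi'
          have hnL : n ∣ L := ⟨Fintype.card A ^ k, hL⟩
          have hr : (i + (k - 1)) % L % n = (i' + (k - 1)) % L % n := by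
            rw [Nat.mod_mod_of_dvd _ hnL, Nat.mod_mod_of_dvd _ hnL]
            exact Nat.ModEq.add_right _ hmod
          have hm : (L - 1 - (i + (k - 1)) % L) % n = (L - 1 - (i' + (k - 1)) % L) % n :=
            sub_mod_eq (Nat.mod_lt _ hL0) (Nat.mod_lt _ hL0) hr
          have heq := h2 _ _ (hφlt _) (hφlt _) p1 p2 hm
          have e1 := phi_phi hk hkL hi
          have e2 := phi_phi hk hkL hi'
          rw [← e1, ← e2, heq]
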